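/- Let K be given at each point by K(T,T) = -2a_4 T, K(T,V) = a_4 V, K(T,W) = a_4 W, K(V,V) = -a_4 T + a_6 V, K(V,W) = -a_6 W, K(W,W) = -a_4 T - a_6 V with respect to an orthonormal frame {T,V,W} (T timelike). Then the Ricci tensor of the Levi-Civita connection of an affine hypersphere with this K satisfies Riĉ(T,T) = -2(H - 3a_4²), Riĉ(V,V) = Riĉ(W,W) = 2(H - a_4² + a_6²), and all off-diagonal components vanish. -/
import Mathlib


open Matrix

/-- ONB inner product of `ℝ³₁` (first coordinate timelike). -/
def ip (x y : Fin 3 → ℝ) : ℝ := -(x 0 * y 0) + x 1 * y 1 + x 2 * y 2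

/-- The standard orthonormal frame `{T,V,W}`. -/
def bas : Fin 3 → Fin 3 → ℝ := ![![1, 0, 0], ![0, 1, 0], ![0, 0, 1]]

/-- The curvature tensor of an affine hypersphere given by the Gauss equation
`R̂(X,Y)Z = H(h(Y,Z)X − h(X,Z)Y) − [K_X,K_Y]Z`. -/
def Rhat (H : ℝ) (K : (Fin 3 → ℝ) →ₗ[ℝ] (Fin 3 → ℝ) →ₗ[ℝ] (Fin 3 → ℝ))
    (X Y Z : Fin 3 → ℝ) : Fin 3 → ℝ :=
  H • (ip Y Z • X - ip X Z • Y) - (K X (K Y Z) - K Y (K X Z))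

/-- The Ricci tensor `Riĉ(X,Y) = trace (Z ↦ R̂(Z,X)Y)`. -/
noncomputable def Ric (H : ℝ)
    (K : (Fin 3 → ℝ) →ₗ[ℝ] (Fin 3 → ℝ) →ₗ[ℝ] (Fin 3 → ℝ))
    (X Y : Fin 3 → ℝ) : ℝ :=
  ∑ i, Rhat H K (bas i) X Y i

/-- For the `SO(2)/S₃/ℤ₃`-form of the difference tensor,
`Riĉ(T,T) = -2(H - 3a₄²)`, `Riĉ(V,V) = Riĉ(W,W) = 2(H - a₄² + a₆²)`, and the
off-diagonal components vanish. -/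
theorem stmt15 (H a₄ a₆ : ℝ)
    (K : (Fin 3 → ℝ) →ₗ[ℝ] (Fin 3 → ℝ) →ₗ[ℝ] (Fin 3 → ℝ))
    (hsymm : ∀ X Y, K X Y = K Y X)
    (h1 : K (bas 0) (bas 0) = (-2 * a₄) • bas 0)
    (h2 : K (bas 0) (bas 1) = a₄ • bas 1)
    (h3 : K (bas 0) (bas 2) = a₄ • bas 2)
    (h4 : K (bas 1) (bas 1) = (-a₄) • bas 0 + a₆ • bas 1)
    (h5 : K (bas 1) (bas 2) = (-a₆) • bas 2)
    (h6 : K (bas 2) (bas 2) = (-a₄) • bas 0 - a₆ • bas 1) :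
    Ric H K (bas 0) (bas 0) = -2 * (H - 3 * a₄ ^ 2) ∧
    Ric H K (bas 1) (bas 1) = 2 * (H - a₄ ^ 2 + a₆ ^ 2) ∧
    Ric H K (bas 2) (bas 2) = 2 * (H - a₄ ^ 2 + a₆ ^ 2) ∧
    Ric H K (bas 0) (bas 1) = 0 ∧
    Ric H K (bas 0) (bas 2) = 0 ∧
    Ric H K (bas 1) (bas 2) = 0 := by
  have h2' : K (bas 1) (bas 0) = a₄ • bas 1 := (hsymm _ _).trans h2
  have h3' : K (bas 2) (bas 0) = a₄ • bas 2 := (hsymm _ _).trans h3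
  have h5' : K (bas 2) (bas 1) = (-a₆) • bas 2 := (hsymm _ _).trans h5
  refine ⟨?_, ?_, ?_, ?_, ?_, ?_⟩ <;>
    [skip; skip; skip; skip; skip; skip] <;>
    · simp only [Ric, Rhat, Fin.sum_univ_three, map_add, _root_.map_smul, map_sub,
        h1, h2, h3, h4, h5, h6, h2', h3', h5']
      simp [ip, bas, Matrix.vecHead, Matrix.vecTail]
      try ring
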